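/- Let ν ∈ ℝ and β = (1+ν)/2. For every t ∈ ℝ, although the individual terms blow up like 1/s² along the diagonal, lim_{s→0, s≠0} [ G^B_{n_x n_x n_x n_y} + (2−ν) G^B_{n_x τ_x τ_x n_y} + (1−ν)κ(t)·( G^B_{τ_x τ_x n_y} − G^B_{n_x n_x n_y} ) − (β/2)·K^{H′} ](γ(t), γ(t+s)) = (1−ν)κ(t)²/(8π), where K^{H′}(x, γ(s′)) = (1/π)(τ(s′)·τ(t))/‖x−γ(s′)‖² − (2/π)·[(x−γ(s′))·τ(t)]·[(x−γ(s′))·τ(s′)]/‖x−γ(s′)‖⁴ is the kernel of the arc-length derivative of the Hilbert transform, and the x-derivatives are taken in the directions n(t), τ(t). -/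

import Mathlib

open Real Filter Topology MeasureTheory

set_option maxHeartbeats 1000000

noncomputable section

/-- Euclidean dot product on `ℝ × ℝ`. -/
def dot2 (v w : ℝ × ℝ) : ℝ := v.1 * w.1 + v.2 * w.2

/-- Unit tangent vector `τ(s) = γ′(s)`. -/
def tang (γ : ℝ → ℝ × ℝ) (s : ℝ) : ℝ × ℝ := deriv γ s

/-- Unit normal vector `n(s) = (τ₂(s), −τ₁(s))`. -/
def nor (γ : ℝ → ℝ × ℝ) (s : ℝ) : ℝ × ℝ := ((deriv γ s).2, -(deriv γ s).1)

/-- Signed curvature `κ(s) = −γ″(s)·n(s)`. -/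
def curv (γ : ℝ → ℝ × ℝ) (s : ℝ) : ℝ := -(dot2 (deriv (deriv γ) s) (nor γ s))

/-- The biharmonic Green's function `G^B(x,y) = (1/(8π))‖x−y‖² log‖x−y‖`. -/
def GB (x y : ℝ × ℝ) : ℝ :=
  1 / (8 * π) * dot2 (x - y) (x - y) * Real.log (Real.sqrt (dot2 (x - y) (x - y)))

/-- Directional derivative in the first argument, in the direction `v`. -/
def ddx (v : ℝ × ℝ) (f : ℝ × ℝ → ℝ × ℝ → ℝ) (x y : ℝ × ℝ) : ℝ :=
  deriv (fun e : ℝ => f (x + e • v) y) 0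

/-- Directional derivative in the second argument, in the direction `v`. -/
def ddy (v : ℝ × ℝ) (f : ℝ × ℝ → ℝ × ℝ → ℝ) (x y : ℝ × ℝ) : ℝ :=
  deriv (fun e : ℝ => f x (y + e • v)) 0

/-- The kernel `K^{H′}(x, γ(s'))` of the arc-length derivative of the Hilbert transform,
with `r = x − γ(s')` and target tangent direction `τ(t)`. -/
def KHp (γ : ℝ → ℝ × ℝ) (t : ℝ) (x : ℝ × ℝ) (s' : ℝ) : ℝ :=
  1 / π * dot2 (tang γ s') (tang γ t) / dot2 (x - γ s') (x - γ s')
    - 2 / π * dot2 (x - γ s') (tang γ t) * dot2 (x - γ s') (tang γ s')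
      / (dot2 (x - γ s') (x - γ s')) ^ 2

lemma dot2_nonneg (z : ℝ × ℝ) : 0 ≤ dot2 z z := by
  simp only [dot2]; nlinarith [sq_nonneg z.1, sq_nonneg z.2]

lemma dot2_pos {z : ℝ × ℝ} (hz : z ≠ 0) : 0 < dot2 z z := by
  rcases eq_or_ne z.1 0 with h1 | h1
  · have h2 : z.2 ≠ 0 := fun h2 => hz (Prod.ext h1 h2)
    simp only [dot2]; nlinarith [sq_nonneg z.1, mul_self_pos.mpr h2]
  · simp only [dot2]; nlinarith [mul_self_pos.mpr h1, sq_nonneg z.2]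

def DD1 (v w : ℝ × ℝ) : ℝ :=
  1/(16*π) * (2 * dot2 w v * (Real.log (dot2 w w) + 1))

def DD2 (a v w : ℝ × ℝ) : ℝ :=
  1/(16*π) * (2 * dot2 a v * (Real.log (dot2 w w) + 1)
    + 4 * dot2 w a * dot2 w v / dot2 w w)

def DD3 (b a v w : ℝ × ℝ) : ℝ :=
  1/(16*π) * (4 * (dot2 b a * dot2 w v + dot2 b v * dot2 w a + dot2 a v * dot2 w b) / dot2 w w
    - 8 * (dot2 w b * dot2 w a * dot2 w v) / (dot2 w w)^2)

def DD4 (c b a v w : ℝ × ℝ) : ℝ :=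
  1/(16*π) * (4 * (dot2 c b * dot2 a v + dot2 c a * dot2 b v + dot2 c v * dot2 b a) / dot2 w w
    - 8 * (dot2 c b * dot2 w a * dot2 w v + dot2 c a * dot2 w b * dot2 w v
        + dot2 c v * dot2 w b * dot2 w a + dot2 b a * dot2 w c * dot2 w v
        + dot2 b v * dot2 w c * dot2 w a + dot2 a v * dot2 w c * dot2 w b) / (dot2 w w)^2
    + 32 * (dot2 w c * dot2 w b * dot2 w a * dot2 w v) / (dot2 w w)^3)

section derivs

variable (w v : ℝ × ℝ) (e0 : ℝ)

lemma hasDerivAt_P :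
    HasDerivAt (fun e : ℝ => dot2 (w + e • v) (w + e • v)) (2 * dot2 (w + e0 • v) v) e0 := by
  have key : (fun e : ℝ => dot2 (w + e • v) (w + e • v))
      = fun e => dot2 w w + 2 * dot2 w v * e + dot2 v v * (e * e) := by
    funext e
    simp only [dot2, Prod.fst_add, Prod.snd_add, Prod.smul_fst, Prod.smul_snd, smul_eq_mul]
    ring
  rw [key]
  have h : HasDerivAt (fun e : ℝ => dot2 w w + 2 * dot2 w v * e + dot2 v v * (e * e))
      (0 + 2 * dot2 w v * 1 + dot2 v v * (1 * e0 + e0 * 1)) e0 :=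
    ((hasDerivAt_const e0 (dot2 w w)).add (((hasDerivAt_id e0)).const_mul (2 * dot2 w v))).add
      (((hasDerivAt_id e0).mul (hasDerivAt_id e0)).const_mul (dot2 v v))
  convert h using 1
  simp only [dot2, Prod.fst_add, Prod.snd_add, Prod.smul_fst, Prod.smul_snd, smul_eq_mul]
  ring

lemma hasDerivAt_L (u : ℝ × ℝ) :
    HasDerivAt (fun e : ℝ => dot2 (w + e • v) u) (dot2 v u) e0 := by
  have key : (fun e : ℝ => dot2 (w + e • v) u) = fun e => dot2 w u + dot2 v u * e := by
    funext e
    simp only [dot2, Prod.fst_add, Prod.snd_add, Prod.smul_fst, Prod.smul_snd, smul_eq_mul]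
    ring
  rw [key]
  simpa using ((hasDerivAt_id e0).const_mul (dot2 v u)).const_add (dot2 w u)

variable {w v e0}

lemma H1 (hz : w + e0 • v ≠ 0) :
    HasDerivAt (fun e : ℝ => 1/(16*π) * (dot2 (w + e • v) (w + e • v)
      * Real.log (dot2 (w + e • v) (w + e • v)))) (DD1 v (w + e0 • v)) e0 := by
  have hq0 : dot2 (w + e0 • v) (w + e0 • v) ≠ 0 := (dot2_pos hz).ne'
  have hP := hasDerivAt_P w v e0
  have h := (hP.mul (hP.log hq0)).const_mul (1/(16*π))
  convert h using 1 <;> first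
    | rfl
    | (funext e; simp only [Pi.mul_apply, Pi.add_apply, Pi.sub_apply, Pi.div_apply, Pi.pow_apply]; ring)
    | (funext e; ring)
    | (simp only [DD1, DD2, DD3, DD4, Pi.mul_apply, Pi.add_apply]; congr 1; field_simp [hq0]; ring)
    | (simp only [DD1, DD2, DD3, DD4, Pi.mul_apply, Pi.add_apply]; congr 1; field_simp [hq0])

lemma H2 (u : ℝ × ℝ) (hz : w + e0 • v ≠ 0) :
    HasDerivAt (fun e : ℝ => DD1 u (w + e • v)) (DD2 v u (w + e0 • v)) e0 := by
  have hq0 : dot2 (w + e0 • v) (w + e0 • v) ≠ 0 := (dot2_pos hz).ne'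
  have hP := hasDerivAt_P w v e0
  have h := ((((hasDerivAt_L w v e0 u).const_mul 2).mul ((hP.log hq0).add_const 1)).const_mul
    (1/(16*π)))
  simp only [DD1]
  convert h using 1 <;> first
    | rfl
    | (funext e; simp only [Pi.mul_apply, Pi.add_apply, Pi.sub_apply, Pi.div_apply, Pi.pow_apply]; ring)
    | (funext e; ring)
    | (simp only [DD1, DD2, DD3, DD4, Pi.mul_apply, Pi.add_apply]; congr 1; field_simp [hq0]; ring)
    | (simp only [DD1, DD2, DD3, DD4, Pi.mul_apply, Pi.add_apply]; congr 1; field_simp [hq0])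

lemma H3 (u u' : ℝ × ℝ) (hz : w + e0 • v ≠ 0) :
    HasDerivAt (fun e : ℝ => DD2 u u' (w + e • v)) (DD3 v u u' (w + e0 • v)) e0 := by
  have hq0 : dot2 (w + e0 • v) (w + e0 • v) ≠ 0 := (dot2_pos hz).ne'
  have hP := hasDerivAt_P w v e0
  have h1 := ((hP.log hq0).add_const 1).const_mul (2 * dot2 u u')
  have h2 := (((hasDerivAt_L w v e0 u).mul (hasDerivAt_L w v e0 u')).const_mul 4).div hP hq0
  have h := (h1.add h2).const_mul (1/(16*π))
  simp only [DD2]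
  convert h using 1 <;> first
    | rfl
    | (funext e; simp only [Pi.mul_apply, Pi.add_apply, Pi.sub_apply, Pi.div_apply, Pi.pow_apply]; ring)
    | (funext e; ring)
    | (simp only [DD1, DD2, DD3, DD4, Pi.mul_apply, Pi.add_apply]; congr 1; field_simp [hq0]; ring)
    | (simp only [DD1, DD2, DD3, DD4, Pi.mul_apply, Pi.add_apply]; congr 1; field_simp [hq0])

lemma H4 (u u' u'' : ℝ × ℝ) (hz : w + e0 • v ≠ 0) :
    HasDerivAt (fun e : ℝ => DD3 u u' u'' (w + e • v)) (DD4 v u u' u'' (w + e0 • v)) e0 := by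
  have hq0 : dot2 (w + e0 • v) (w + e0 • v) ≠ 0 := (dot2_pos hz).ne'
  have hq20 : (dot2 (w + e0 • v) (w + e0 • v))^2 ≠ 0 := pow_ne_zero _ hq0
  have hP := hasDerivAt_P w v e0
  have hLu := hasDerivAt_L w v e0 u
  have hLu' := hasDerivAt_L w v e0 u'
  have hLu'' := hasDerivAt_L w v e0 u''
  have h1 : HasDerivAt (fun e : ℝ => 4 * (dot2 u u' * dot2 (w + e • v) u''
      + dot2 u u'' * dot2 (w + e • v) u' + dot2 u' u'' * dot2 (w + e • v) u)
        / dot2 (w + e • v) (w + e • v)) _ e0 :=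
    ((((hLu''.const_mul (dot2 u u')).add (hLu'.const_mul (dot2 u u''))).add
      (hLu.const_mul (dot2 u' u''))).const_mul 4).div hP hq0
  have h2 : HasDerivAt (fun e : ℝ => 8 * (dot2 (w + e • v) u * dot2 (w + e • v) u'
      * dot2 (w + e • v) u'') / (dot2 (w + e • v) (w + e • v))^2) _ e0 :=
    (((hLu.mul hLu').mul hLu'').const_mul 8).div (hP.pow 2) hq20
  have h := (h1.sub h2).const_mul (1/(16*π))
  simp only [DD3]
  convert h using 1 <;> first
    | rfl
    | (funext e; simp only [Pi.mul_apply, Pi.add_apply, Pi.sub_apply, Pi.div_apply, Pi.pow_apply]; ring)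
    | (funext e; ring)
    | (simp only [DD1, DD2, DD3, DD4, Pi.mul_apply, Pi.add_apply]; congr 1; field_simp [hq0]; ring)
    | (simp only [DD1, DD2, DD3, DD4, Pi.mul_apply, Pi.add_apply]; congr 1; field_simp [hq0])

end derivs




lemma GB_eq (x y : ℝ × ℝ) :
    GB x y = 1/(16*π) * (dot2 (x - y) (x - y) * Real.log (dot2 (x - y) (x - y))) := by
  rw [GB, Real.log_sqrt (dot2_nonneg _)]
  ring

lemma ddy_eq (m : ℝ × ℝ) {x y : ℝ × ℝ} (h : x ≠ y) : ddy m GB x y = -DD1 m (x - y) := by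
  have hfun : (fun e : ℝ => GB x (y + e • m))
      = fun e : ℝ => 1/(16*π) * (dot2 ((x - y) + e • (-m)) ((x - y) + e • (-m))
          * Real.log (dot2 ((x - y) + e • (-m)) ((x - y) + e • (-m)))) := by
    funext e
    rw [GB_eq]
    have : x - (y + e • m) = x - y + e • (-m) := by
      rw [smul_neg, ← sub_eq_add_neg, sub_add_eq_sub_sub]
    rw [this]
  have hz : x - y + (0:ℝ) • (-m) ≠ 0 := by
    simpa using sub_ne_zero.mpr h
  have h1 := H1 (w := x - y) (v := -m) (e0 := 0) hz
  rw [ddy, hfun, h1.deriv]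
  have : x - y + (0:ℝ) • (-m) = x - y := by simp
  rw [this, DD1, DD1]
  simp only [dot2, Prod.fst_neg, Prod.snd_neg]
  ring

lemma eventually_ne {x y a : ℝ × ℝ} (h : x ≠ y) : ∀ᶠ e : ℝ in 𝓝 0, x + e • a ≠ y := by
  have hcont : Continuous (fun e : ℝ => x + e • a) := by continuity
  have : (fun e : ℝ => x + e • a) ⁻¹' {y}ᶜ ∈ 𝓝 (0:ℝ) := by
    apply hcont.continuousAt.preimage_mem_nhds
    simpa using compl_singleton_mem_nhds h
  filter_upwards [this] with e he
  simpa using he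

lemma shift_eq (x y a : ℝ × ℝ) (e : ℝ) : x + e • a - y = x - y + e • a := by
  abel

lemma ddx1_eq (a m : ℝ × ℝ) {x y : ℝ × ℝ} (h : x ≠ y) :
    ddx a (ddy m GB) x y = -DD2 a m (x - y) := by
  have hev : (fun e : ℝ => ddy m GB (x + e • a) y) =ᶠ[𝓝 (0:ℝ)]
      (fun e : ℝ => -DD1 m ((x - y) + e • a)) := by
    filter_upwards [eventually_ne (a := a) h] with e he
    rw [ddy_eq m he, shift_eq]
  have hz : x - y + (0:ℝ) • a ≠ 0 := by simpa using sub_ne_zero.mpr h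
  have h2 : HasDerivAt (fun e => -DD1 m (x - y + e • a)) _ (0:ℝ) := (H2 (w := x - y) (v := a) m hz).neg
  rw [ddx, hev.deriv_eq, h2.deriv]
  simp

lemma ddx2_eq (b a m : ℝ × ℝ) {x y : ℝ × ℝ} (h : x ≠ y) :
    ddx b (ddx a (ddy m GB)) x y = -DD3 b a m (x - y) := by
  have hev : (fun e : ℝ => ddx a (ddy m GB) (x + e • b) y) =ᶠ[𝓝 (0:ℝ)]
      (fun e : ℝ => -DD2 a m ((x - y) + e • b)) := by
    filter_upwards [eventually_ne (a := b) h] with e he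
    rw [ddx1_eq a m he, shift_eq]
  have hz : x - y + (0:ℝ) • b ≠ 0 := by simpa using sub_ne_zero.mpr h
  have h3 : HasDerivAt (fun e => -DD2 a m (x - y + e • b)) _ (0:ℝ) := (H3 (w := x - y) (v := b) a m hz).neg
  rw [ddx, hev.deriv_eq, h3.deriv]
  simp

lemma ddx3_eq (c b a m : ℝ × ℝ) {x y : ℝ × ℝ} (h : x ≠ y) :
    ddx c (ddx b (ddx a (ddy m GB))) x y = -DD4 c b a m (x - y) := by
  have hev : (fun e : ℝ => ddx b (ddx a (ddy m GB)) (x + e • c) y) =ᶠ[𝓝 (0:ℝ)]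
      (fun e : ℝ => -DD3 b a m ((x - y) + e • c)) := by
    filter_upwards [eventually_ne (a := c) h] with e he
    rw [ddx2_eq b a m he, shift_eq]
  have hz : x - y + (0:ℝ) • c ≠ 0 := by simpa using sub_ne_zero.mpr h
  have h4 : HasDerivAt (fun e => -DD3 b a m (x - y + e • c)) _ (0:ℝ) := (H4 (w := x - y) (v := c) b a m hz).neg
  rw [ddx, hev.deriv_eq, h4.deriv]
  simp

/-- first-order limit from a derivative at 0. -/
lemma lim_slope {f : ℝ → ℝ} {d : ℝ} (hf : HasDerivAt f d 0) (h0 : f 0 = 0) :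
    Tendsto (fun s => f s / s) (𝓝[≠] (0:ℝ)) (𝓝 d) := by
  have := hasDerivAt_iff_tendsto_slope.mp hf
  apply this.congr
  intro s
  simp [slope_def_field, h0, div_eq_inv_mul]

/-- second-order limit via L'Hopital. -/
lemma lim_lhopital2 {f g : ℝ → ℝ} {d : ℝ} (hf : ∀ x, HasDerivAt f (g x) x)
    (h0 : f 0 = 0) (hg0 : g 0 = 0) (hd : HasDerivAt g d 0) :
    Tendsto (fun s => f s / s ^ 2) (𝓝[≠] (0:ℝ)) (𝓝 (d/2)) := by
  apply HasDerivAt.lhopital_zero_nhdsNE (f' := g) (g' := fun x => 2*x)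
  · exact Filter.Eventually.of_forall fun x => hf x
  · refine Filter.Eventually.of_forall fun x => ?_
    simpa using ((hasDerivAt_pow 2 x))
  · rw [eventually_nhdsWithin_iff]
    refine Filter.Eventually.of_forall fun x hx => by
      simpa using (Set.mem_compl_singleton_iff.mp hx)
  · have : Tendsto f (𝓝 (0:ℝ)) (𝓝 0) := by
      simpa [h0] using (hf 0).continuousAt.tendsto
    exact this.mono_left nhdsWithin_le_nhds
  · have : Tendsto (fun x : ℝ => x^2) (𝓝 (0:ℝ)) (𝓝 0) := by
      simpa using (continuous_pow 2).tendsto (0:ℝ)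
    exact this.mono_left nhdsWithin_le_nhds
  · have h1 : Tendsto (fun s => g s / s) (𝓝[≠] (0:ℝ)) (𝓝 d) := lim_slope hd hg0
    have h2 := h1.div_const 2
    apply h2.congr
    intro s
    rw [div_div, mul_comm]

lemma hasDerivAt_fst {f : ℝ → ℝ × ℝ} {f' : ℝ × ℝ} {x : ℝ} (h : HasDerivAt f f' x) :
    HasDerivAt (fun s => (f s).1) f'.1 x :=
  (ContinuousLinearMap.fst ℝ ℝ ℝ).hasFDerivAt.comp_hasDerivAt x h

lemma hasDerivAt_snd {f : ℝ → ℝ × ℝ} {f' : ℝ × ℝ} {x : ℝ} (h : HasDerivAt f f' x) :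
    HasDerivAt (fun s => (f s).2) f'.2 x :=
  (ContinuousLinearMap.snd ℝ ℝ ℝ).hasFDerivAt.comp_hasDerivAt x h

lemma hasDerivAt_dot2 {f : ℝ → ℝ × ℝ} {f' : ℝ × ℝ} {x : ℝ} (h : HasDerivAt f f' x)
    (u : ℝ × ℝ) : HasDerivAt (fun s => dot2 (f s) u) (dot2 f' u) x := by
  exact ((hasDerivAt_fst h).mul_const u.1).add ((hasDerivAt_snd h).mul_const u.2)

lemma gamma_ne {L : ℝ} (hL : 0 < L) {γ : ℝ → ℝ × ℝ}
    (hper : ∀ s, γ (s + L) = γ s) (hinj : Set.InjOn γ (Set.Ico 0 L))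
    (t s : ℝ) (hs : s ≠ 0) (habs : |s| < L) : γ t ≠ γ (t + s) := by
  intro h
  have hperiodic : Function.Periodic γ L := hper
  have ha : γ (t - ⌊t/L⌋ * L) = γ t := hperiodic.sub_int_mul_eq _
  have hb : γ (t + s - ⌊(t+s)/L⌋ * L) = γ (t + s) := hperiodic.sub_int_mul_eq _
  have hmem1 : t - ⌊t/L⌋ * L ∈ Set.Ico 0 L :=
    ⟨Int.sub_floor_div_mul_nonneg t hL, Int.sub_floor_div_mul_lt t hL⟩
  have hmem2 : t + s - ⌊(t+s)/L⌋ * L ∈ Set.Ico 0 L :=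
    ⟨Int.sub_floor_div_mul_nonneg (t+s) hL, Int.sub_floor_div_mul_lt (t+s) hL⟩
  have heq : t - ⌊t/L⌋ * L = t + s - ⌊(t+s)/L⌋ * L := by
    apply hinj hmem1 hmem2
    rw [ha, hb, h]
  have hs_eq : s = ((⌊(t+s)/L⌋ - ⌊t/L⌋ : ℤ) : ℝ) * L := by
    push_cast
    linarith
  rcases eq_or_ne (⌊(t+s)/L⌋ - ⌊t/L⌋) 0 with hm | hm
  · rw [hm] at hs_eq; simp at hs_eq; exact hs hs_eq
  · have h1 : (1:ℝ) ≤ |((⌊(t+s)/L⌋ - ⌊t/L⌋ : ℤ) : ℝ)| := by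
      rw [← Int.cast_abs]
      exact_mod_cast Int.one_le_abs hm
    have : L ≤ |s| := by
      rw [hs_eq, abs_mul, abs_of_pos hL]
      nlinarith
    linarith

def Mpoly (s k nu a b c d : ℝ) : ℝ :=
  (1-nu) * (-24*a^2*b^2*c + 16*k*a^4*b*c + 8*s^2*b^4*c - 32*s^2*a*b^3*d
    + 16*s^2*k*a^2*b^3*c + 16*s^2*k*a^3*b^2*d + 16*s^4*k*a*b^4*d)

theorem stmt8 (L : ℝ) (hL : 0 < L) (γ : ℝ → ℝ × ℝ)
    (hγ : ContDiff ℝ (⊤ : ℕ∞) γ)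
    (hper : ∀ s, γ (s + L) = γ s)
    (hinj : Set.InjOn γ (Set.Ico 0 L))
    (harc : ∀ s, dot2 (deriv γ s) (deriv γ s) = 1)
    (ν β : ℝ) (hβ : β = (1 + ν) / 2) (t : ℝ) :
    Tendsto
      (fun s : ℝ =>
        ddx (nor γ t) (ddx (nor γ t) (ddx (nor γ t)
            (ddy (nor γ (t + s)) GB))) (γ t) (γ (t + s))
          + (2 - ν) * ddx (nor γ t) (ddx (tang γ t) (ddx (tang γ t)
              (ddy (nor γ (t + s)) GB))) (γ t) (γ (t + s))
          + (1 - ν) * curv γ t *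
              (ddx (tang γ t) (ddx (tang γ t)
                  (ddy (nor γ (t + s)) GB)) (γ t) (γ (t + s))
                - ddx (nor γ t) (ddx (nor γ t)
                    (ddy (nor γ (t + s)) GB)) (γ t) (γ (t + s)))
          - β / 2 * KHp γ t (γ t) (t + s))
      (𝓝[≠] (0 : ℝ)) (𝓝 ((1 - ν) * (curv γ t) ^ 2 / (8 * π))) := by
  subst hβ
  have hpi : (π:ℝ) ≠ 0 := Real.pi_ne_zero
  have hγ' : ContDiff ℝ ((⊤ : ℕ∞) : WithTop ℕ∞) γ := hγ
  have hγdiff : Differentiable ℝ γ := hγ'.differentiable (by simp)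
  have hγ1 : ContDiff ℝ ((⊤ : ℕ∞) : WithTop ℕ∞) (deriv γ) := (contDiff_infty_iff_deriv.mp hγ').2
  have hγ1diff : Differentiable ℝ (deriv γ) := hγ1.differentiable (by simp)
  have hdγ : ∀ u, HasDerivAt γ (deriv γ u) u := fun u => (hγdiff u).hasDerivAt
  have hdγ1 : ∀ u, HasDerivAt (deriv γ) (deriv (deriv γ) u) u := fun u => (hγ1diff u).hasDerivAt
  have hshift : ∀ s : ℝ, HasDerivAt (fun s => γ (t+s)) (deriv γ (t+s)) s := by
    intro s
    have h1 : HasDerivAt (fun s : ℝ => t + s) 1 s := by simpa using (hasDerivAt_id s).const_add t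
    simpa [Function.comp_def] using (hdγ (t+s)).scomp s h1
  have hshift1 : ∀ s : ℝ, HasDerivAt (fun s => deriv γ (t+s)) (deriv (deriv γ) (t+s)) s := by
    intro s
    have h1 : HasDerivAt (fun s : ℝ => t + s) 1 s := by simpa using (hasDerivAt_id s).const_add t
    simpa [Function.comp_def] using (hdγ1 (t+s)).scomp s h1
  have harct := harc t
  have hQ : ∀ s : ℝ, dot2 (γ t - γ (t+s)) (γ t - γ (t+s))
      = dot2 (γ t - γ (t+s)) (tang γ t)^2 + dot2 (γ t - γ (t+s)) (nor γ t)^2 := by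
    intro s
    have h := harc t
    simp only [dot2, tang, nor] at h ⊢
    linear_combination (-((γ t - γ (t+s)).1 * (γ t - γ (t+s)).1
      + (γ t - γ (t+s)).2 * (γ t - γ (t+s)).2)) * h
  -- limits of the normalized remainders
  have htA : Tendsto (fun s => dot2 (γ t - γ (t+s)) (tang γ t) / s) (𝓝[≠] (0:ℝ)) (𝓝 (-1)) := by
    refine lim_slope ?_ ?_
    · have hder := hasDerivAt_dot2 ((hshift 0).const_sub (γ t)) (tang γ t)
      convert hder using 1
      have h := harc t
      simp only [dot2, tang, add_zero, Prod.fst_neg, Prod.snd_neg] at h ⊢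
      linarith
    · simp [dot2]
  have htB : Tendsto (fun s => dot2 (γ t - γ (t+s)) (nor γ t) / s^2) (𝓝[≠] (0:ℝ))
      (𝓝 (curv γ t / 2)) := by
    refine lim_lhopital2 (g := fun x => dot2 (-deriv γ (t+x)) (nor γ t))
      (fun x => hasDerivAt_dot2 ((hshift x).const_sub (γ t)) (nor γ t)) ?_ ?_ ?_
    · simp [dot2]
    · simp only [add_zero, dot2, nor, Prod.fst_neg, Prod.snd_neg]; ring
    · have hder := hasDerivAt_dot2 (f := fun s => -deriv γ (t+s)) ((hshift1 0).neg) (nor γ t)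
      convert hder using 1
      simp only [add_zero, curv, dot2, nor, Prod.fst_neg, Prod.snd_neg]
      ring
  have hcont1 : Continuous (fun s : ℝ => deriv γ (t+s)) :=
    hγ1.continuous.comp (continuous_const.add continuous_id)
  have htC : Tendsto (fun s => dot2 (tang γ (t+s)) (tang γ t)) (𝓝[≠] (0:ℝ)) (𝓝 1) := by
    have hc : Continuous (fun s : ℝ => dot2 (tang γ (t+s)) (tang γ t)) := by
      simp only [dot2, tang]
      exact (hcont1.fst.mul continuous_const).add (hcont1.snd.mul continuous_const)
    have h2 : Tendsto (fun s => dot2 (tang γ (t+s)) (tang γ t)) (𝓝[≠] (0:ℝ))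
        (𝓝 (dot2 (tang γ (t+0)) (tang γ t))) := (hc.tendsto 0).mono_left nhdsWithin_le_nhds
    simpa [tang, harct] using h2
  have htD : Tendsto (fun s => dot2 (tang γ (t+s)) (nor γ t) / s) (𝓝[≠] (0:ℝ))
      (𝓝 (-curv γ t)) := by
    refine lim_slope ?_ ?_
    · have hder : HasDerivAt (fun s => dot2 (tang γ (t+s)) (nor γ t))
          (dot2 (deriv (deriv γ) (t+0)) (nor γ t)) 0 := hasDerivAt_dot2 (hshift1 0) (nor γ t)
      convert hder using 1
      simp only [add_zero, curv, dot2, nor]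
      ring
    · simp only [tang, add_zero, dot2, nor]
      ring
  have hsmall : ∀ᶠ s in 𝓝[≠] (0:ℝ), |s| < L := by
    have h1 : ∀ᶠ s in 𝓝 (0:ℝ), |s| < L := by
      filter_upwards [Metric.ball_mem_nhds (0:ℝ) hL] with s hs
      simpa [Real.dist_eq] using hs
    exact h1.filter_mono nhdsWithin_le_nhds
  have hs2 : Tendsto (fun s : ℝ => s^2) (𝓝[≠] (0:ℝ)) (𝓝 0) := by
    have h2 : Tendsto (fun s : ℝ => s^2) (𝓝[≠] (0:ℝ)) (𝓝 ((0:ℝ)^2)) :=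
      ((continuous_pow 2).tendsto (0:ℝ)).mono_left nhdsWithin_le_nhds
    simpa using h2
  have hq2 : Tendsto (fun s => s^2 / dot2 (γ t - γ (t+s)) (γ t - γ (t+s)))
      (𝓝[≠] (0:ℝ)) (𝓝 1) := by
    have hbase := (htA.pow 2).add (hs2.mul (htB.pow 2))
    rw [show ((-1:ℝ))^2 + 0*(curv γ t/2)^2 = 1 by norm_num] at hbase
    have hinv := hbase.inv₀ (by norm_num)
    rw [show ((1:ℝ))⁻¹ = 1 by norm_num] at hinv
    apply hinv.congr'
    filter_upwards [self_mem_nhdsWithin, hsmall] with s hs0 hsl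
    have hs0' : s ≠ 0 := hs0
    have hne : γ t ≠ γ (t+s) := gamma_ne hL hper hinj t s hs0' hsl
    have hq0 : dot2 (γ t - γ (t+s)) (γ t - γ (t+s)) ≠ 0 :=
      (dot2_pos (sub_ne_zero.mpr hne)).ne'
    have hQs : (dot2 (γ t - γ (t+s)) (tang γ t)/s)^2
        + s^2*(dot2 (γ t - γ (t+s)) (nor γ t)/s^2)^2
        = dot2 (γ t - γ (t+s)) (γ t - γ (t+s)) / s^2 := by
      rw [hQ s]; field_simp
    rw [hQs, inv_div]
  -- the pointwise algebraic identity
  have key : ∀ s : ℝ, s ≠ 0 → |s| < L →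
      ddx (nor γ t) (ddx (nor γ t) (ddx (nor γ t)
            (ddy (nor γ (t + s)) GB))) (γ t) (γ (t + s))
          + (2 - ν) * ddx (nor γ t) (ddx (tang γ t) (ddx (tang γ t)
              (ddy (nor γ (t + s)) GB))) (γ t) (γ (t + s))
          + (1 - ν) * curv γ t *
              (ddx (tang γ t) (ddx (tang γ t)
                  (ddy (nor γ (t + s)) GB)) (γ t) (γ (t + s))
                - ddx (nor γ t) (ddx (nor γ t)
                    (ddy (nor γ (t + s)) GB)) (γ t) (γ (t + s)))
          - (1 + ν) / 2 / 2 * KHp γ t (γ t) (t + s)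
      = Mpoly s (curv γ t) ν (dot2 (γ t - γ (t+s)) (tang γ t)/s)
          (dot2 (γ t - γ (t+s)) (nor γ t)/s^2)
          (dot2 (tang γ (t+s)) (tang γ t)) (dot2 (tang γ (t+s)) (nor γ t)/s)
          * (s^2 / dot2 (γ t - γ (t+s)) (γ t - γ (t+s)))^3 / (16*π) := by
    intro s hs0 hsl
    have hne : γ t ≠ γ (t+s) := gamma_ne hL hper hinj t s hs0 hsl
    have hw : γ t - γ (t+s) ≠ 0 := sub_ne_zero.mpr hne
    have hq0 : dot2 (γ t - γ (t+s)) (γ t - γ (t+s)) ≠ 0 := (dot2_pos hw).ne'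
    have h := harc t
    simp only [dot2] at h
    have e1 : dot2 (nor γ t) (nor γ t) = 1 := by
      simp only [dot2, nor]; linear_combination h
    have e2 : dot2 (nor γ t) (tang γ t) = 0 := by simp only [dot2, nor, tang]; ring
    have e2' : dot2 (tang γ t) (nor γ t) = 0 := by simp only [dot2, nor, tang]; ring
    have e3 : dot2 (tang γ t) (tang γ t) = 1 := harc t
    have e4 : dot2 (nor γ t) (nor γ (t+s)) = dot2 (tang γ (t+s)) (tang γ t) := by
      simp only [dot2, nor, tang]; ring
    have e5 : dot2 (tang γ t) (nor γ (t+s)) = -(dot2 (tang γ (t+s)) (nor γ t)) := by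
      simp only [dot2, nor, tang]; ring
    have e6 : dot2 (γ t - γ (t+s)) (nor γ (t+s))
        = dot2 (γ t - γ (t+s)) (nor γ t) * dot2 (tang γ (t+s)) (tang γ t)
          - dot2 (γ t - γ (t+s)) (tang γ t) * dot2 (tang γ (t+s)) (nor γ t) := by
      simp only [dot2, nor, tang]
      linear_combination (-((γ t - γ (t+s)).1 * (deriv γ (t+s)).2
        - (γ t - γ (t+s)).2 * (deriv γ (t+s)).1)) * h
    have e7 : dot2 (γ t - γ (t+s)) (tang γ (t+s))
        = dot2 (γ t - γ (t+s)) (tang γ t) * dot2 (tang γ (t+s)) (tang γ t)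
          + dot2 (γ t - γ (t+s)) (nor γ t) * dot2 (tang γ (t+s)) (nor γ t) := by
      simp only [dot2, nor, tang]
      linear_combination (-((γ t - γ (t+s)).1 * (deriv γ (t+s)).1
        + (γ t - γ (t+s)).2 * (deriv γ (t+s)).2)) * h
    rw [ddx3_eq _ _ _ _ hne, ddx3_eq _ _ _ _ hne, ddx2_eq _ _ _ hne, ddx2_eq _ _ _ hne]
    simp only [DD4, DD3, KHp, Mpoly]
    rw [hQ s] at hq0
    simp only [e1, e2, e2', e3, e4, e5, e6, e7, hQ s]
    field_simp
    ring
  -- continuity of the limit polynomial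
  have hMc : Continuous (fun p : ℝ × ℝ × ℝ × ℝ × ℝ =>
      Mpoly p.1 (curv γ t) ν p.2.1 p.2.2.1 p.2.2.2.1 p.2.2.2.2) := by
    unfold Mpoly; fun_prop
  have hid : Tendsto (fun s : ℝ => s) (𝓝[≠] (0:ℝ)) (𝓝 0) :=
    tendsto_id.mono_right nhdsWithin_le_nhds
  have hMf := (hMc.tendsto (0, -1, curv γ t/2, 1, -curv γ t)).comp
    (hid.prodMk_nhds (htA.prodMk_nhds (htB.prodMk_nhds (htC.prodMk_nhds htD))))
  have hfinal := (hMf.mul (hq2.pow 3)).div_const (16*π)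
  have hfinal' : Tendsto (fun s => Mpoly s (curv γ t) ν
        (dot2 (γ t - γ (t+s)) (tang γ t)/s) (dot2 (γ t - γ (t+s)) (nor γ t)/s^2)
        (dot2 (tang γ (t+s)) (tang γ t)) (dot2 (tang γ (t+s)) (nor γ t)/s)
      * (s^2 / dot2 (γ t - γ (t+s)) (γ t - γ (t+s)))^3 / (16*π))
      (𝓝[≠] (0:ℝ)) (𝓝 ((1 - ν) * curv γ t ^ 2 / (8 * π))) := by
    convert hfinal using 2
    · rfl
    simp only [Mpoly]
    field_simp
    ring
  apply hfinal'.congr'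
  filter_upwards [self_mem_nhdsWithin, hsmall] with s hs0 hsl
  exact (key s hs0 hsl).symm
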